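/- Let v₁ = (0,0,0), v₂ = (1000,0,0), v₃ = (164,549,0), v₄ = (505,−391,−14), v₅ = (495,435,−577), v₆ = (169,256,351), v₇ = (292,−306,−467), v₈ = (−74,362,181), v₉ = (616,−295,−123), v₁₀ = (572,609,−549) in ℝ³, and define edge vectors eᵢ = v_{i+1} − vᵢ for i = 1, …, 9 and e₁₀ = v₁ − v₁₀. Then there is no w ∈ ℝ³ such that (−1)^{i+1} (w · eᵢ) > 0 for every i ∈ {1, …, 10}. -/
import Mathlib


/-- The vertices of the paper's 10-stick polygonal realization of the knot `8_14`.
Here `vert8_14 i` is the paper's vertex `v_(i+1)`. -/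
noncomputable def vert8_14 : Fin 10 → (Fin 3 → ℝ) :=
  ![![0, 0, 0], ![1000, 0, 0], ![164, 549, 0], ![505, -391, -14], ![495, 435, -577], ![169, 256, 351], ![292, -306, -467], ![-74, 362, 181], ![616, -295, -123], ![572, 609, -549]]

/-- The edge vectors `eᵢ = v_(i+1) − vᵢ` (cyclically, so `e₁₀ = v₁ − v₁₀`);
here `edge8_14 i` is the paper's `e_(i+1)`, using wrap-around addition on `Fin 10`. -/
noncomputable def edge8_14 (i : Fin 10) : Fin 3 → ℝ :=
  vert8_14 (i + 1) - vert8_14 i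

lemma edge8_14_0 : edge8_14 0 = ![1000, 0, 0] := by
  funext j
  have h1 : vert8_14 1 = ![1000, 0, 0] := rfl
  have h0 : vert8_14 0 = ![0, 0, 0] := rfl
  simp only [edge8_14, show ((0 : Fin 10) + 1) = 1 from rfl, h1, h0, Pi.sub_apply]
  fin_cases j <;> norm_num

lemma edge8_14_2 : edge8_14 2 = ![341, -940, -14] := by
  funext j
  have h1 : vert8_14 3 = ![505, -391, -14] := rfl
  have h0 : vert8_14 2 = ![164, 549, 0] := rfl
  simp only [edge8_14, show ((2 : Fin 10) + 1) = 3 from rfl, h1, h0, Pi.sub_apply]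
  fin_cases j <;> norm_num

lemma edge8_14_7 : edge8_14 7 = ![690, -657, -304] := by
  funext j
  have h1 : vert8_14 8 = ![616, -295, -123] := rfl
  have h0 : vert8_14 7 = ![-74, 362, 181] := rfl
  simp only [edge8_14, show ((7 : Fin 10) + 1) = 8 from rfl, h1, h0, Pi.sub_apply]
  fin_cases j <;> norm_num

lemma edge8_14_8 : edge8_14 8 = ![-44, 904, -426] := by
  funext j
  have h1 : vert8_14 9 = ![572, 609, -549] := rfl
  have h0 : vert8_14 8 = ![616, -295, -123] := rfl
  simp only [edge8_14, show ((8 : Fin 10) + 1) = 9 from rfl, h1, h0, Pi.sub_apply]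
  fin_cases j <;> norm_num

/-- There is no `w ∈ ℝ³` such that `(−1)^(i+1) (w · eᵢ) > 0` for every
`i ∈ {1, …, 10}`: no projection of this polygon (the knot `8_14`) to a line has
5 local maxima. (With 0-based indexing `i : Fin 10`, the sign is `(−1)^i`.) -/
theorem no_alternating_direction_8_14 :
    ¬ ∃ w : Fin 3 → ℝ, ∀ i : Fin 10,
        0 < (-1 : ℝ) ^ (i : ℕ) * ∑ j : Fin 3, w j * edge8_14 i j := by
  rintro ⟨w, h⟩
  have h0 := h 0
  have h2 := h 2
  have h7 := h 7
  have h8 := h 8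
  rw [edge8_14_0] at h0
  rw [edge8_14_2] at h2
  rw [edge8_14_7] at h7
  rw [edge8_14_8] at h8
  simp only [Fin.sum_univ_three, Matrix.cons_val_zero, Matrix.cons_val_one, Matrix.head_cons,
    Matrix.cons_val_two, Matrix.tail_cons] at h0 h2 h7 h8
  norm_num [show ((2 : Fin 10) : ℕ) = 2 from rfl, show ((7 : Fin 10) : ℕ) = 7 from rfl,
    show ((8 : Fin 10) : ℕ) = 8 from rfl] at h0 h2 h7 h8
  linarith [mul_pos (by norm_num : (0:ℝ) < 2161059) h0]
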